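/- The 7-periodic sequences a = (…,6,3,1,3,4,2,1,…) and b = (…,3,14,1,2,6,5,1,…) define a 7-super-periodic difference equation: every solution (V_i) of V_i = a_i V_{i−1} − b_i V_{i−2} + a_{i−1} V_{i−3} − V_{i−4} satisfies V_{i+7} = −V_i for all i ∈ ℤ. -/

import Mathlib

/-- The 7-periodic coefficient sequences `a = (6,3,1,3,4,2,1)` and `b = (3,14,1,2,6,5,1)`
define a 7-super-periodic difference equation: every solution is 7-antiperiodic. -/
theorem example_seven_superperiodic (a b : ℤ → ℚ)
    (ha : ∀ i, a (i + 7) = a i) (hb : ∀ i, b (i + 7) = b i)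
    (ha0 : a 0 = 6) (ha1 : a 1 = 3) (ha2 : a 2 = 1) (ha3 : a 3 = 3)
    (ha4 : a 4 = 4) (ha5 : a 5 = 2) (ha6 : a 6 = 1)
    (hb0 : b 0 = 3) (hb1 : b 1 = 14) (hb2 : b 2 = 1) (hb3 : b 3 = 2)
    (hb4 : b 4 = 6) (hb5 : b 5 = 5) (hb6 : b 6 = 1)
    (V : ℤ → ℚ)
    (hV : ∀ i, V i = a i * V (i - 1) - b i * V (i - 2) + a (i - 1) * V (i - 3) - V (i - 4)) :
    ∀ i, V (i + 7) = -V i := by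
  -- C i := V (i+7) + V i; show C satisfies the same recurrence
  have hstep : ∀ i : ℤ, V (i + 11) + V (i + 4) =
      a (i + 4) * (V (i + 10) + V (i + 3)) - b (i + 4) * (V (i + 9) + V (i + 2))
      + a (i + 3) * (V (i + 8) + V (i + 1)) - (V (i + 7) + V i) := by
    intro i
    have h1 := hV (i + 11)
    have h2 := hV (i + 4)
    have e1 : a (i + 11) = a (i + 4) := by
      have := ha (i + 4); rwa [show i + 4 + 7 = i + 11 by ring] at this
    have e2 : b (i + 11) = b (i + 4) := by
      have := hb (i + 4); rwa [show i + 4 + 7 = i + 11 by ring] at this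
    have e3 : a (i + 10) = a (i + 3) := by
      have := ha (i + 3); rwa [show i + 3 + 7 = i + 10 by ring] at this
    rw [show i + 11 - 1 = i + 10 by ring, show i + 11 - 2 = i + 9 by ring,
        show i + 11 - 3 = i + 8 by ring, show i + 11 - 4 = i + 7 by ring,
        e1, e2, e3] at h1
    rw [show i + 4 - 1 = i + 3 by ring, show i + 4 - 2 = i + 2 by ring,
        show i + 4 - 3 = i + 1 by ring, show i + 4 - 4 = i by ring] at h2
    linear_combination h1 + h2
  -- explicit values of V 4 .. V 10 in terms of V 0 .. V 3
  have e4 := hV 4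
  have e5 := hV 5
  have e6 := hV 6
  have e7 := hV 7
  have e8 := hV 8
  have e9 := hV 9
  have e10 := hV 10
  have ha7 : a 7 = 6 := by rw [show (7:ℤ) = 0 + 7 by ring, ha 0, ha0]
  have ha8 : a 8 = 3 := by rw [show (8:ℤ) = 1 + 7 by ring, ha 1, ha1]
  have ha9 : a 9 = 1 := by rw [show (9:ℤ) = 2 + 7 by ring, ha 2, ha2]
  have ha10 : a 10 = 3 := by rw [show (10:ℤ) = 3 + 7 by ring, ha 3, ha3]
  have hb7 : b 7 = 3 := by rw [show (7:ℤ) = 0 + 7 by ring, hb 0, hb0]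
  have hb8 : b 8 = 14 := by rw [show (8:ℤ) = 1 + 7 by ring, hb 1, hb1]
  have hb9 : b 9 = 1 := by rw [show (9:ℤ) = 2 + 7 by ring, hb 2, hb2]
  have hb10 : b 10 = 2 := by rw [show (10:ℤ) = 3 + 7 by ring, hb 3, hb3]
  norm_num [ha0, ha1, ha2, ha3, ha4, ha5, ha6, hb0, hb1, hb2, hb3, hb4, hb5, hb6,
    ha7, ha8, ha9, ha10, hb7, hb8, hb9, hb10] at e4 e5 e6 e7 e8 e9 e10
  have c0 : V 7 + V 0 = 0 := by linarith
  have c1 : V 8 + V 1 = 0 := by linarith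
  have c2 : V 9 + V 2 = 0 := by linarith
  have c3 : V 10 + V 3 = 0 := by linarith
  have key : ∀ n : ℤ, (V (n + 7) + V n = 0) ∧ (V (n + 8) + V (n + 1) = 0)
      ∧ (V (n + 9) + V (n + 2) = 0) ∧ (V (n + 10) + V (n + 3) = 0) := by
    intro n
    induction n using Int.induction_on with
    | zero => norm_num [c0, c1, c2, c3]
    | succ k ih =>
      obtain ⟨q0, q1, q2, q3⟩ := ih
      refine ⟨?_, ?_, ?_, ?_⟩
      · rw [show (k : ℤ) + 1 + 7 = k + 8 by ring, show (k : ℤ) + 1 = k + 1 by ring]; exact q1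
      · rw [show (k : ℤ) + 1 + 8 = k + 9 by ring, show (k : ℤ) + 1 + 1 = k + 2 by ring]; exact q2
      · rw [show (k : ℤ) + 1 + 9 = k + 10 by ring, show (k : ℤ) + 1 + 2 = k + 3 by ring]; exact q3
      · rw [show (k : ℤ) + 1 + 10 = k + 11 by ring, show (k : ℤ) + 1 + 3 = k + 4 by ring]
        have := hstep k
        linear_combination this + a (k + 4) * q3 - b (k + 4) * q2 + a (k + 3) * q1 - q0
    | pred k ih =>
      obtain ⟨q0, q1, q2, q3⟩ := ih
      refine ⟨?_, ?_, ?_, ?_⟩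
      · have h := hstep (-(k : ℤ) - 1)
        rw [show -(k : ℤ) - 1 + 11 = -k + 10 by ring, show -(k : ℤ) - 1 + 4 = -k + 3 by ring,
            show -(k : ℤ) - 1 + 10 = -k + 9 by ring, show -(k : ℤ) - 1 + 3 = -k + 2 by ring,
            show -(k : ℤ) - 1 + 9 = -k + 8 by ring, show -(k : ℤ) - 1 + 2 = -k + 1 by ring,
            show -(k : ℤ) - 1 + 8 = -k + 7 by ring, show -(k : ℤ) - 1 + 1 = -k by ring,
            show -(k : ℤ) - 1 + 7 = -k + 6 by ring] at h
        rw [show -(k : ℤ) - 1 + 7 = -k + 6 by ring]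
        linear_combination h + a (-(k:ℤ) + 3) * q2 - b (-(k:ℤ) + 3) * q1
          + a (-(k:ℤ) + 2) * q0 - q3
      · rw [show -(k : ℤ) - 1 + 8 = -k + 7 by ring, show -(k : ℤ) - 1 + 1 = -k by ring]
        exact q0
      · rw [show -(k : ℤ) - 1 + 9 = -k + 8 by ring, show -(k : ℤ) - 1 + 2 = -k + 1 by ring]
        exact q1
      · rw [show -(k : ℤ) - 1 + 10 = -k + 9 by ring, show -(k : ℤ) - 1 + 3 = -k + 2 by ring]
        exact q2
    
  intro i
  have := (key i).1
  linarith
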